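/- There exists a nonzero continuous linear functional φ on the pre-Hilbert space H ⊆ ℓ²(ℕ, ℂ) of finitely supported complex sequences (with the ℓ² inner product) such that φ vanishes on the set S := {e_n − 2·e_{n+1} : n ∈ ℕ}, even though S^⊥ ∩ H = {0}. Hence the kernel of φ is a proper closed subspace of H containing S whose orthogonal complement in H is trivial. -/

import Mathlib

/-- The pre-Hilbert space `H ⊆ ℓ²(ℕ, ℂ)` of finitely supported sequences, as a
(non-closed) subspace of `ℓ²` with the induced inner-product norm. -/
noncomputable def Hfin : Submodule ℂ (lp (fun _ : ℕ => ℂ) 2) where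
  carrier := {x | {n : ℕ | x n ≠ 0}.Finite}
  zero_mem' := Set.finite_empty.subset (by intro n hn; simp at hn)
  add_mem' := by
    intro a b ha hb
    apply (ha.union hb).subset
    intro n hn
    by_contra hc
    simp only [Set.mem_union, Set.mem_setOf_eq, not_or, not_not] at hc
    exact hn (by simp [lp.coeFn_add, Pi.add_apply, hc.1, hc.2])
  smul_mem' := by
    intro c x hx
    apply hx.subset
    intro n hn
    by_contra hc
    simp only [Set.mem_setOf_eq, not_not] at hc
    exact hn (by simp [lp.coeFn_smul, Pi.smul_apply, hc])

noncomputable def gvec : lp (fun _ : ℕ => ℂ) 2 :=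
  ⟨fun n => (1/2 : ℂ) ^ n, by
    apply memℓp_gen
    have h4 : Summable (fun n : ℕ => (1/4 : ℝ)^n) :=
      summable_geometric_of_lt_one (by norm_num) (by norm_num)
    refine h4.congr fun n => ?_
    rw [show ((2:ENNReal).toReal) = ((2:ℕ):ℝ) by norm_num, Real.rpow_natCast, norm_pow,
      ← pow_mul, mul_comm n 2, pow_mul]
    norm_num⟩

lemma gvec_apply (n : ℕ) : gvec n = (1/2 : ℂ) ^ n := rfl

lemma single_mem_Hfin (n : ℕ) (a : ℂ) : lp.single 2 n a ∈ Hfin := by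
  apply (Set.finite_singleton n).subset
  intro j hj
  simp only [Set.mem_setOf_eq] at hj
  simp only [Set.mem_singleton_iff]
  by_contra hc
  exact hj (lp.single_apply_ne (E := fun _ : ℕ => ℂ) 2 n a hc)

lemma sMem (n : ℕ) :
    lp.single 2 n (1 : ℂ) - (2 : ℂ) • lp.single 2 (n + 1) (1 : ℂ) ∈ Hfin :=
  Hfin.sub_mem (single_mem_Hfin n 1) (Hfin.smul_mem 2 (single_mem_Hfin (n + 1) 1))

lemma Sperp_trivial (x : Hfin)
    (h : ∀ n : ℕ, (inner ℂ (lp.single 2 n (1 : ℂ) - (2 : ℂ) • lp.single 2 (n + 1) (1 : ℂ))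
      ((x : lp (fun _ : ℕ => ℂ) 2)) : ℂ) = 0) : x = 0 := by
  obtain ⟨x, hx⟩ := x
  have key : ∀ n : ℕ, x n = 2 * x (n + 1) := by
    intro n
    have := h n
    rw [inner_sub_left, inner_smul_left, lp.inner_single_left, lp.inner_single_left] at this
    simp only [inner_smul_left] at this
    have : (x n : ℂ) - 2 * x (n+1) = 0 := by
      simpa [RCLike.inner_apply, Complex.conj_ofNat] using this
    linear_combination this
  have step : ∀ k n : ℕ, x n = 2 ^ k * x (n + k) := by
    intro k
    induction k with
    | zero => simp
    | succ k ih =>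
      intro n
      rw [ih n, key (n + k)]
      ring
  obtain ⟨N, hN⟩ := (hx.subset (fun a ha => ha)).bddAbove
  have hzero : ∀ n, x n = 0 := by
    intro n
    have hbig : x (n + N + 1) = 0 := by
      by_contra hc
      have := hN (Set.mem_setOf_eq ▸ hc : n + N + 1 ∈ {m | x m ≠ 0})
      omega
    have := step (N + 1) n
    rw [← Nat.add_assoc] at this
    rw [this, hbig, mul_zero]
  exact Subtype.ext (lp.ext (funext hzero))

/-- There is a nonzero continuous linear functional `φ` on the pre-Hilbert space `H` of
finitely supported sequences which vanishes on `S = {e_n - 2·e_{n+1} : n ∈ ℕ}`, even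
though `S^⊥ ∩ H = {0}`; in particular `ker φ` is a proper closed subspace containing `S`
whose orthogonal complement in `H` is trivial. -/
theorem stmt13 :
    ∃ φ : Hfin →L[ℂ] ℂ, φ ≠ 0 ∧
      (∀ x : Hfin,
        (∃ n : ℕ, (x : lp (fun _ : ℕ => ℂ) 2) =
          lp.single 2 n (1 : ℂ) - (2 : ℂ) • lp.single 2 (n + 1) (1 : ℂ)) → φ x = 0) ∧
      (∀ x : Hfin,
        (∀ n : ℕ, (inner ℂ (lp.single 2 n (1 : ℂ) - (2 : ℂ) • lp.single 2 (n + 1) (1 : ℂ))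
          (x : lp (fun _ : ℕ => ℂ) 2) : ℂ) = 0) → x = 0) ∧
      (∀ x : Hfin,
        (∀ y : Hfin, φ y = 0 →
          (inner ℂ (y : lp (fun _ : ℕ => ℂ) 2) (x : lp (fun _ : ℕ => ℂ) 2) : ℂ) = 0) → x = 0) := by
  classical
  set φ := (innerSL ℂ gvec).comp Hfin.subtypeL with hφdef
  have hvan : ∀ x : Hfin,
      (∃ n : ℕ, (x : lp (fun _ : ℕ => ℂ) 2) =
        lp.single 2 n (1 : ℂ) - (2 : ℂ) • lp.single 2 (n + 1) (1 : ℂ)) → φ x = 0 := by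
    rintro x ⟨n, hn⟩
    simp only [hφdef, ContinuousLinearMap.comp_apply, Submodule.subtypeL_apply, innerSL_apply_apply]
    rw [hn]
    rw [inner_sub_right, inner_smul_right, lp.inner_single_right, lp.inner_single_right]
    have h2 : (starRingEnd ℂ) (2:ℂ) = 2 := by simp [Complex.ext_iff]
    simp only [gvec_apply, RCLike.inner_apply, map_pow, map_one, map_div₀, h2, mul_one]
    ring
  refine ⟨φ, ?_, hvan, fun x h => Sperp_trivial x h, ?_⟩
  · intro h
    have h0 : (innerSL ℂ gvec) ((⟨lp.single 2 0 (1:ℂ), single_mem_Hfin 0 1⟩ : Hfin) : lp (fun _ : ℕ => ℂ) 2) = 0 := by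
      have := congrFun (congrArg DFunLike.coe h) ⟨lp.single 2 0 (1:ℂ), single_mem_Hfin 0 1⟩
      simpa [hφdef] using this
    rw [innerSL_apply_apply, lp.inner_single_right] at h0
    simp [gvec_apply] at h0
  · intro x h
    apply Sperp_trivial
    intro n
    exact h ⟨_, sMem n⟩ (hvan _ ⟨n, rfl⟩)
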